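/- (Theorem 5.1, inverse formula.) Let Ã ∈ M be closed, corresponding to T : V → W. Then Ã : D(Ã) → H is bijective if and only if T : D(T) → W is bijective, and in that case Ã^{-1} = A_γ^{-1} + i_V ∘ T^{-1} ∘ pr_W as operators on H. -/

import Mathlib

noncomputable section

open Filter Topology

namespace GrubbExt

variable {H : Type*} [NormedAddCommGroup H] [InnerProductSpace ℂ H] [CompleteSpace H]

/-- The inclusion of a closed subspace composed with the orthogonal projection onto it,
as a continuous linear map `H →L[ℂ] H`.  This is `i_K ∘ pr_K` in the notation of the paper. -/
def projCl (K : Submodule ℂ H) (hK : IsClosed (K : Set H)) : H →L[ℂ] H :=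
  haveI : CompleteSpace K := hK.completeSpace_coe
  K.subtypeL.comp K.orthogonalProjectionOnto

/-- `R` is the (everywhere defined, bounded) inverse of `P - lam`. -/
structure IsResolvent (P : H →ₗ.[ℂ] H) (lam : ℂ) (R : H →L[ℂ] H) : Prop where
  mem : ∀ f : H, R f ∈ P.domain
  left : ∀ u : P.domain, R (P u - lam • (u : H)) = u
  right : ∀ f : H, P ⟨R f, mem f⟩ - lam • R f = f

/-- `E^λ := I + λ(A_γ - λ)^{-1}`, given the resolvent `R = (A_γ - λ)^{-1}`. -/
def Eop (lam : ℂ) (R : H →L[ℂ] H) : H →L[ℂ] H := ContinuousLinearMap.id ℂ H + lam • R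

/-- `E'^{λ̄} := I + λ̄(A_γ^* - λ̄)^{-1}`, given the resolvent `R' = (A_γ^* - λ̄)^{-1}`. -/
def Eop' (lam : ℂ) (R' : H →L[ℂ] H) : H →L[ℂ] H :=
  ContinuousLinearMap.id ℂ H + (starRingEnd ℂ lam) • R'

/-- The resolvent set of a partially defined operator. -/
def resSet (P : H →ₗ.[ℂ] H) : Set ℂ := {lam | ∃ R : H →L[ℂ] H, IsResolvent P lam R}

/-- The set of "Rayleigh quotients" `Re⟨Pu,u⟩` over unit vectors `u` in the domain of `P`;
the lower bound `m(P)` is the infimum of this set. -/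
def raySet (P : H →ₗ.[ℂ] H) : Set ℝ :=
  {r | ∃ u : P.domain, ‖(u : H)‖ = 1 ∧ r = (inner ℂ (P u) (u : H) : ℂ).re}

/-- The abstract set-up of Grubb's extension theory: a dual pair `A_min, A'_min` of closed
densely defined operators in a Hilbert space `H`, together with a reference operator `A_γ`
lying between `A_min` and `A_max := (A'_min)*`, which is bijective with bounded inverse
(and whose adjoint is likewise bijective with bounded inverse). -/
structure Setup (H : Type*) [NormedAddCommGroup H] [InnerProductSpace ℂ H]
    [CompleteSpace H] where
  Amin : H →ₗ.[ℂ] H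
  Amin' : H →ₗ.[ℂ] H
  closed_Amin : IsClosed (Amin.graph : Set (H × H))
  closed_Amin' : IsClosed (Amin'.graph : Set (H × H))
  dense_Amin : Dense (Amin.domain : Set H)
  dense_Amin' : Dense (Amin'.domain : Set H)
  Amin_le_max : Amin ≤ Amin'.adjoint
  Amin'_le_max' : Amin' ≤ Amin.adjoint
  Agam : H →ₗ.[ℂ] H
  Amin_le_Agam : Amin ≤ Agam
  Agam_le_max : Agam ≤ Amin'.adjoint
  Agaminv : H →L[ℂ] H
  Agaminv_mem : ∀ f : H, Agaminv f ∈ Agam.domain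
  Agaminv_left : ∀ u : Agam.domain, Agaminv (Agam u) = u
  Agaminv_right : ∀ f : H, Agam ⟨Agaminv f, Agaminv_mem f⟩ = f
  Agamstarinv : H →L[ℂ] H
  Agamstarinv_mem : ∀ f : H, Agamstarinv f ∈ Agam.adjoint.domain
  Agamstarinv_left : ∀ v : Agam.adjoint.domain, Agamstarinv (Agam.adjoint v) = v
  Agamstarinv_right : ∀ f : H, Agam.adjoint ⟨Agamstarinv f, Agamstarinv_mem f⟩ = f

namespace Setup

variable (S : Setup H)

/-- `A_max := (A'_min)*`. -/
def Amax : H →ₗ.[ℂ] H := S.Amin'.adjoint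

/-- `A'_max := (A_min)*`. -/
def Amax' : H →ₗ.[ℂ] H := S.Amin.adjoint

/-- `u_ζ := u - A_γ^{-1} A_max u`, the nullspace component of `u ∈ D(A_max)`. -/
def uzeta (u : S.Amax.domain) : H := (u : H) - S.Agaminv (S.Amax u)

/-- `v_{ζ'} := v - (A_γ^*)^{-1} A'_max v`, the nullspace component of `v ∈ D(A'_max)`. -/
def vzeta (v : S.Amax'.domain) : H := (v : H) - S.Agamstarinv (S.Amax' v)

/-- `Z := ker A_max`, as a submodule of `H`. -/
def Zker : Submodule ℂ H := (LinearMap.ker S.Amax.toFun).map S.Amax.domain.subtype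

/-- `Z' := ker A'_max`, as a submodule of `H`. -/
def Zker' : Submodule ℂ H := (LinearMap.ker S.Amax'.toFun).map S.Amax'.domain.subtype

lemma coe_Zker :
    (S.Zker : Set H) = ⋂ v : S.Amin'.domain, {y : H | (inner ℂ y (S.Amin' v) : ℂ) = 0} := by
  ext y
  simp only [Set.mem_iInter, Set.mem_setOf_eq, SetLike.mem_coe, Zker, Submodule.mem_map,
    LinearMap.mem_ker]
  constructor
  · rintro ⟨u, hu, rfl⟩ v
    have h := (LinearPMap.adjoint_isFormalAdjoint S.dense_Amin') u v
    have hu' : S.Amin'.adjoint u = 0 := hu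
    rw [hu'] at h
    simpa using h.symm
  · intro h
    have hmem : y ∈ S.Amax.domain := by
      refine LinearPMap.mem_adjoint_domain_of_exists _ ⟨0, fun x => ?_⟩
      simp [h x]
    refine ⟨⟨y, hmem⟩, ?_, rfl⟩
    exact LinearPMap.adjoint_apply_eq S.dense_Amin' ⟨y, hmem⟩ fun x => by simp [h x]

lemma isClosed_Zker : IsClosed (S.Zker : Set H) := by
  rw [S.coe_Zker]
  exact isClosed_iInter fun v =>
    isClosed_eq (Continuous.inner continuous_id continuous_const) continuous_const

lemma coe_Zker' :
    (S.Zker' : Set H) = ⋂ v : S.Amin.domain, {y : H | (inner ℂ y (S.Amin v) : ℂ) = 0} := by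
  ext y
  simp only [Set.mem_iInter, Set.mem_setOf_eq, SetLike.mem_coe, Zker', Submodule.mem_map,
    LinearMap.mem_ker]
  constructor
  · rintro ⟨u, hu, rfl⟩ v
    have h := (LinearPMap.adjoint_isFormalAdjoint S.dense_Amin) u v
    have hu' : S.Amin.adjoint u = 0 := hu
    rw [hu'] at h
    simpa using h.symm
  · intro h
    have hmem : y ∈ S.Amax'.domain := by
      refine LinearPMap.mem_adjoint_domain_of_exists _ ⟨0, fun x => ?_⟩
      simp [h x]
    refine ⟨⟨y, hmem⟩, ?_, rfl⟩
    exact LinearPMap.adjoint_apply_eq S.dense_Amin ⟨y, hmem⟩ fun x => by simp [h x]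

lemma isClosed_Zker' : IsClosed (S.Zker' : Set H) := by
  rw [S.coe_Zker']
  exact isClosed_iInter fun v =>
    isClosed_eq (Continuous.inner continuous_id continuous_const) continuous_const

/-- The orthogonal projection onto `Z = ker A_max`. -/
def projZ : H →L[ℂ] H := projCl S.Zker S.isClosed_Zker

/-- The orthogonal projection onto `Z' = ker A'_max`. -/
def projZ' : H →L[ℂ] H := projCl S.Zker' S.isClosed_Zker'

variable (At : H →ₗ.[ℂ] H)

/-- `D(T) = {u_ζ : u ∈ D(Ã)}`, the set of nullspace components of elements of `D(Ã)`. -/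
def dzeta : Set H := {x | ∃ u : S.Amax.domain, (u : H) ∈ At.domain ∧ x = S.uzeta u}

/-- `{v_{ζ'} : v ∈ D(Ã*)}`. -/
def dzeta' : Set H := {x | ∃ v : S.Amax'.domain, (v : H) ∈ At.adjoint.domain ∧ x = S.vzeta v}

/-- `V := closure {u_ζ : u ∈ D(Ã)}`. -/
def Vsub : Submodule ℂ H := (Submodule.span ℂ (S.dzeta At)).topologicalClosure

/-- `W := closure {v_{ζ'} : v ∈ D(Ã*)}`. -/
def Wsub : Submodule ℂ H := (Submodule.span ℂ (S.dzeta' At)).topologicalClosure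

lemma isClosed_Vsub : IsClosed ((S.Vsub At : Set H)) :=
  Submodule.isClosed_topologicalClosure _

lemma isClosed_Wsub : IsClosed ((S.Wsub At : Set H)) :=
  Submodule.isClosed_topologicalClosure _

/-- The orthogonal projection onto `V`. -/
def projV : H →L[ℂ] H := projCl (S.Vsub At) (S.isClosed_Vsub At)

/-- The orthogonal projection onto `W`. -/
def projW : H →L[ℂ] H := projCl (S.Wsub At) (S.isClosed_Wsub At)

/-- The set `{(u_ζ, pr_W (A_max u)) : u ∈ D(Ã)}`, for a general closed subspace `W`. -/
def TgraphOn (W : Submodule ℂ H) (hW : IsClosed (W : Set H)) : Set (H × H) :=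
  {p | ∃ u : S.Amax.domain, (u : H) ∈ At.domain ∧ p.1 = S.uzeta u ∧
    p.2 = projCl W hW (S.Amax u)}

/-- The graph of the operator `T : V → W` corresponding to `Ã`. -/
def Tgraph : Set (H × H) := S.TgraphOn At (S.Wsub At) (S.isClosed_Wsub At)


/-- `F^λ := I - λ A_γ^{-1}`. -/
def Fop (lam : ℂ) : H →L[ℂ] H := ContinuousLinearMap.id ℂ H - lam • S.Agaminv

/-- `F'^{λ̄} := I - λ̄ (A_γ^*)^{-1}`. -/
def Fop' (lam : ℂ) : H →L[ℂ] H := ContinuousLinearMap.id ℂ H - (starRingEnd ℂ lam) • S.Agamstarinv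

/-- `Z_λ := ker(A_max - λ)`, as a subset of `H`. -/
def ZkerL (lam : ℂ) : Set H :=
  {x | ∃ hx : x ∈ S.Amax.domain, S.Amax ⟨x, hx⟩ = lam • x}

/-- `Z'_{λ̄} := ker(A'_max - λ̄)`, as a subset of `H`. -/
def ZkerL' (lam : ℂ) : Set H :=
  {x | ∃ hx : x ∈ S.Amax'.domain, S.Amax' ⟨x, hx⟩ = (starRingEnd ℂ lam) • x}

/-- `pr^λ_ζ u := u - (A_γ - λ)^{-1}(A_max - λ)u`, given the resolvent `R = (A_γ - λ)^{-1}`. -/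
def uzetaL (lam : ℂ) (R : H →L[ℂ] H) (u : S.Amax.domain) : H :=
  (u : H) - R (S.Amax u - lam • (u : H))

/-- `pr^{λ̄}_{ζ'} v := v - (A_γ^* - λ̄)^{-1}(A'_max - λ̄)v`,
given the resolvent `R' = (A_γ^* - λ̄)^{-1}`. -/
def vzetaL (lam : ℂ) (R' : H →L[ℂ] H) (v : S.Amax'.domain) : H :=
  (v : H) - R' (S.Amax' v - (starRingEnd ℂ lam) • (v : H))

/-- `D(T^λ) = {pr^λ_ζ u : u ∈ D(Ã)}`. -/
def dzetaL (lam : ℂ) (R : H →L[ℂ] H) : Set H :=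
  {x | ∃ u : S.Amax.domain, (u : H) ∈ At.domain ∧ x = S.uzetaL lam R u}

/-- `{pr^{λ̄}_{ζ'} v : v ∈ D(Ã*)}`. -/
def dzetaL' (lam : ℂ) (R' : H →L[ℂ] H) : Set H :=
  {x | ∃ v : S.Amax'.domain, (v : H) ∈ At.adjoint.domain ∧ x = S.vzetaL lam R' v}

/-- `V_λ := closure {pr^λ_ζ u : u ∈ D(Ã)}`. -/
def VLsub (lam : ℂ) (R : H →L[ℂ] H) : Submodule ℂ H :=
  (Submodule.span ℂ (S.dzetaL At lam R)).topologicalClosure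

/-- `W_{λ̄} := closure {pr^{λ̄}_{ζ'} v : v ∈ D(Ã*)}`. -/
def WLsub (lam : ℂ) (R' : H →L[ℂ] H) : Submodule ℂ H :=
  (Submodule.span ℂ (S.dzetaL' At lam R')).topologicalClosure

lemma isClosed_WLsub (lam : ℂ) (R' : H →L[ℂ] H) : IsClosed ((S.WLsub At lam R' : Set H)) :=
  Submodule.isClosed_topologicalClosure _

/-- The orthogonal projection onto `W_{λ̄}`. -/
def projWL (lam : ℂ) (R' : H →L[ℂ] H) : H →L[ℂ] H :=
  projCl (S.WLsub At lam R') (S.isClosed_WLsub At lam R')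

/-- The graph of the operator `T^λ : V_λ → W_{λ̄}` corresponding to `Ã - λ`:
`{(pr^λ_ζ u, pr_{W_{λ̄}}((A_max - λ)u)) : u ∈ D(Ã)}`. -/
def TgraphL (lam : ℂ) (R R' : H →L[ℂ] H) : Set (H × H) :=
  {p | ∃ u : S.Amax.domain, (u : H) ∈ At.domain ∧ p.1 = S.uzetaL lam R u ∧
    p.2 = S.projWL At lam R' (S.Amax u - lam • (u : H))}

/-- `G^λ_{V,W} x := -pr_W (λ E^λ x)`, where `W = W(Ã)`. -/
def Gval (lam : ℂ) (R : H →L[ℂ] H) (x : H) : H :=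
  -(S.projW At (lam • Eop lam R x))

/-- `G^μ_{Z,Z} z := -pr_Z (μ E^μ z)`. -/
def GZval (lam : ℂ) (R : H →L[ℂ] H) (x : H) : H :=
  -(S.projZ (lam • Eop lam R x))

lemma mem_Amax_res {lam : ℂ} {Rt : H →L[ℂ] H} (h2 : At ≤ S.Amax)
    (hRt : IsResolvent At lam Rt) (w : H) :
    S.Agaminv w - Rt (w - lam • S.Agaminv w) ∈ S.Amax.domain :=
  Submodule.sub_mem _ (S.Agam_le_max.1 (S.Agaminv_mem w)) (h2.1 (hRt.mem _))

/-- `M(λ) w := pr_ζ ((I - (Ã - λ)^{-1}(A_max - λ)) A_γ^{-1} w)`, the value of the abstract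
`M`-function on `w`. -/
def Mval {lam : ℂ} {Rt : H →L[ℂ] H} (h2 : At ≤ S.Amax) (hRt : IsResolvent At lam Rt)
    (w : H) : H :=
  S.uzeta ⟨S.Agaminv w - Rt (w - lam • S.Agaminv w), S.mem_Amax_res At h2 hRt w⟩

end Setup

section InverseFormulaAux

local notation "⟪" x ", " y "⟫" => @inner ℂ H _ x y

/-- If `⟪Ã* v, a⟫ = ⟪v, b⟫` for all `v` in the domain of the adjoint, and `Ã` is closed
and densely defined, then `(a, b)` belongs to the graph of `Ã`. -/
lemma mem_graph_of_forall_adjoint (At : H →ₗ.[ℂ] H) (hd : Dense (At.domain : Set H))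
    (hcl : IsClosed (At.graph : Set (H × H))) (a b : H)
    (hab : ∀ v : At.adjoint.domain, ⟪At.adjoint v, a⟫ = ⟪(v : H), b⟫) :
    (a, b) ∈ At.graph := by
  classical
  set e : WithLp 2 (H × H) ≃L[ℂ] H × H := WithLp.prodContinuousLinearEquiv 2 ℂ H H with he
  set Γ : Submodule ℂ (WithLp 2 (H × H)) :=
    At.graph.comap (e.toLinearEquiv : WithLp 2 (H × H) →ₗ[ℂ] H × H) with hΓ
  have hmemΓ : ∀ z : WithLp 2 (H × H), z ∈ Γ ↔ e z ∈ At.graph := fun z => Iff.rfl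
  have hΓcl : IsClosed (Γ : Set (WithLp 2 (H × H))) := by
    have : (Γ : Set (WithLp 2 (H × H))) = e ⁻¹' (At.graph : Set (H × H)) := rfl
    rw [this]; exact hcl.preimage e.continuous
  haveI : CompleteSpace Γ := hΓcl.completeSpace_coe
  have key : e.symm (a, b) ∈ Γ := by
    rw [← Submodule.orthogonal_orthogonal Γ, Submodule.mem_orthogonal]
    intro u hu
    rw [Submodule.mem_orthogonal] at hu
    have hzero : ∀ w : At.domain, ⟪(w : H), (e u).1⟫ + ⟪At w, (e u).2⟫ = 0 := by
      intro w
      have hz : e.symm ((w : H), At w) ∈ Γ := by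
        rw [hmemΓ, e.apply_symm_apply]; exact At.mem_graph w
      have h0 := hu _ hz
      rw [WithLp.prod_inner_apply] at h0
      convert h0 using 2 <;> rfl
    -- `(e u).2` belongs to the domain of the adjoint, with value `-(e u).1`
    have hmem : (e u).2 ∈ At.adjoint.domain := by
      refine LinearPMap.mem_adjoint_domain_of_exists _ ⟨-(e u).1, fun w => ?_⟩
      have h0 := hzero w
      have : ⟪At w, (e u).2⟫ = ⟪(w : H), -(e u).1⟫ := by
        rw [inner_neg_right]; linear_combination h0
      calc ⟪-(e u).1, (w : H)⟫ = starRingEnd ℂ ⟪(w : H), -(e u).1⟫ := (inner_conj_symm _ _).symm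
        _ = starRingEnd ℂ ⟪At w, (e u).2⟫ := by rw [this]
        _ = ⟪(e u).2, At w⟫ := inner_conj_symm _ _
    have hval : At.adjoint ⟨(e u).2, hmem⟩ = -(e u).1 := by
      refine LinearPMap.adjoint_apply_eq hd _ fun w => ?_
      have h0 := hzero w
      calc ⟪-(e u).1, (w : H)⟫ = starRingEnd ℂ ⟪(w : H), -(e u).1⟫ := (inner_conj_symm _ _).symm
        _ = starRingEnd ℂ ⟪At w, (e u).2⟫ := by
            rw [inner_neg_right]; congr 1; linear_combination -h0
        _ = ⟪(e u).2, At w⟫ := inner_conj_symm _ _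
    have hfinal := hab ⟨(e u).2, hmem⟩
    rw [hval] at hfinal
    -- now compute the inner product
    have : (inner ℂ u (e.symm (a, b)) : ℂ) = ⟪(e u).1, a⟫ + ⟪(e u).2, b⟫ := by
      rw [WithLp.prod_inner_apply]
      congr 2 <;> rfl
    rw [this, ← hfinal, inner_neg_left]
    ring
  have hfin := (hmemΓ _).mp key
  rwa [e.apply_symm_apply] at hfin

variable (S : Setup H)

lemma dense_Agam : Dense (S.Agam.domain : Set H) :=
  S.dense_Amin.mono fun _ hx => S.Amin_le_Agam.1 hx

lemma pairing (g p : H) : ⟪p, S.Agaminv g⟫ = ⟪S.Agamstarinv p, g⟫ := by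
  have h := LinearPMap.adjoint_isFormalAdjoint (dense_Agam S)
    ⟨S.Agamstarinv p, S.Agamstarinv_mem p⟩ ⟨S.Agaminv g, S.Agaminv_mem g⟩
  rwa [S.Agamstarinv_right, S.Agaminv_right] at h

variable (At : H →ₗ.[ℂ] H) (h1 : S.Amin ≤ At) (h2 : At ≤ S.Amax)

include h1 in
lemma dense_At : Dense (At.domain : Set H) :=
  S.dense_Amin.mono fun _ hx => h1.1 hx

include h1 in
lemma adjoint_le_Amax' : At.adjoint ≤ S.Amax' := by
  have hdAt : Dense (At.domain : Set H) := dense_At S At h1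
  constructor
  case left =>
    intro v hv
    refine LinearPMap.mem_adjoint_domain_of_exists _ ⟨At.adjoint ⟨v, hv⟩, fun w => ?_⟩
    have h := LinearPMap.adjoint_isFormalAdjoint hdAt ⟨v, hv⟩ ⟨(w : H), h1.1 w.2⟩
    rw [h]
    congr 1
    exact (h1.2 (rfl : ((w : H)) = ((⟨(w : H), h1.1 w.2⟩ : At.domain) : H))).symm
  case right =>
    intro x y hxy
    refine (LinearPMap.adjoint_apply_eq S.dense_Amin _ fun w => ?_).symm
    have h := LinearPMap.adjoint_isFormalAdjoint hdAt x ⟨(w : H), h1.1 w.2⟩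
    rw [h, ← hxy]
    congr 1
    exact (h1.2 (rfl : ((w : H)) = ((⟨(w : H), h1.1 w.2⟩ : At.domain) : H))).symm

include h1 in
lemma vzeta_mem_Wsub (v : At.adjoint.domain) :
    (v : H) - S.Agamstarinv (At.adjoint v) ∈ S.Wsub At := by
  have hle := adjoint_le_Amax' S At h1
  have hmem : (v : H) ∈ S.Amax'.domain := hle.1 v.2
  have hval : S.Amax' ⟨(v : H), hmem⟩ = At.adjoint v :=
    (hle.2 (rfl : ((v : H)) = ((⟨(v : H), hmem⟩ : S.Amax'.domain) : H))).symm
  have hdz : (v : H) - S.Agamstarinv (At.adjoint v) ∈ S.dzeta' At := by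
    refine ⟨⟨(v : H), hmem⟩, v.2, ?_⟩
    simp [Setup.vzeta, hval]
  exact Submodule.le_topologicalClosure _ (Submodule.subset_span hdz)

include h1 in
lemma key_graph_mem (hcl : IsClosed (At.graph : Set (H × H))) (g : H)
    (hg : ∀ w ∈ S.Wsub At, ⟪w, g⟫ = (0 : ℂ)) :
    (S.Agaminv g, g) ∈ At.graph := by
  refine mem_graph_of_forall_adjoint At (dense_At S At h1) hcl _ _ fun v => ?_
  rw [pairing S g (At.adjoint v)]
  have h5 := hg _ (vzeta_mem_Wsub S At h1 v)
  rw [inner_sub_left, sub_eq_zero] at h5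
  exact h5.symm

lemma projCl_mem (K : Submodule ℂ H) (hK : IsClosed (K : Set H)) (f : H) :
    projCl K hK f ∈ K := by
  haveI : CompleteSpace K := hK.completeSpace_coe
  exact (K.orthogonalProjectionOnto f).2

lemma projCl_of_mem (K : Submodule ℂ H) (hK : IsClosed (K : Set H)) {f : H} (hf : f ∈ K) :
    projCl K hK f = f := by
  haveI : CompleteSpace K := hK.completeSpace_coe
  exact congrArg Subtype.val (K.orthogonalProjectionOnto_mem_subspace_eq_self ⟨f, hf⟩)

lemma projCl_eq_zero (K : Submodule ℂ H) (hK : IsClosed (K : Set H)) {f : H}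
    (h : projCl K hK f = 0) : ∀ w ∈ K, (inner ℂ w f : ℂ) = 0 := by
  haveI : CompleteSpace K := hK.completeSpace_coe
  have h0 : K.orthogonalProjectionOnto f = 0 := by
    have : (K.orthogonalProjectionOnto f : H) = 0 := h
    exact_mod_cast this
  intro w hw
  exact (Submodule.mem_orthogonal K f).mp (Submodule.orthogonalProjectionOnto_eq_zero_iff.mp h0) w hw

end InverseFormulaAux


theorem statement_7 (S : Setup H) (At : H →ₗ.[ℂ] H)
    (h1 : S.Amin ≤ At) (h2 : At ≤ S.Amax)
    (hcl : IsClosed (At.graph : Set (H × H)))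
    (T : H →ₗ.[ℂ] H) (hT : (T.graph : Set (H × H)) = S.Tgraph At) :
    ((∀ f : H, ∃! u : At.domain, At u = f) ↔
      (Function.Injective fun x : T.domain => T x) ∧
        Set.range (fun x : T.domain => T x) = (S.Wsub At : Set H)) ∧
    ((∀ f : H, ∃! u : At.domain, At u = f) →
      ∀ f x : H, (x, S.projW At f) ∈ T.graph →
        ∀ u : At.domain, At u = f → (u : H) = S.Agaminv f + x) := by
  classical
  have hmemT : ∀ p : H × H, p ∈ T.graph ↔
      ∃ u : At.domain, p.1 = (u : H) - S.Agaminv (At u) ∧ p.2 = S.projW At (At u) := by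
    intro p
    have h0 : p ∈ T.graph ↔ p ∈ S.Tgraph At := by rw [← SetLike.mem_coe, hT]
    rw [h0]
    constructor
    · rintro ⟨u, hu, hx, hw⟩
      have heq : At ⟨(u : H), hu⟩ = S.Amax u := h2.2 rfl
      refine ⟨⟨(u : H), hu⟩, ?_, ?_⟩
      · rw [hx]; simp only [Setup.uzeta, heq]
      · rw [hw]; simp only [Setup.projW, heq]
    · rintro ⟨u, hx, hw⟩
      have heq : At u = S.Amax ⟨(u : H), h2.1 u.2⟩ := h2.2 rfl
      refine ⟨⟨(u : H), h2.1 u.2⟩, u.2, ?_, ?_⟩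
      · rw [hx]; simp only [Setup.uzeta, ← heq]
      · rw [hw]; simp only [Setup.projW, ← heq]
  have hfwd : ∀ u : At.domain,
      ((u : H) - S.Agaminv (At u), S.projW At (At u)) ∈ T.graph :=
    fun u => (hmemT _).mpr ⟨u, rfl, rfl⟩
  have hprojW_mem : ∀ f : H, S.projW At f ∈ S.Wsub At := fun f => projCl_mem _ _ f
  have hprojW_self : ∀ {w : H}, w ∈ S.Wsub At → S.projW At w = w :=
    fun hw => projCl_of_mem _ _ hw
  have hprojW_zero : ∀ {f : H}, S.projW At f = 0 → ∀ w ∈ S.Wsub At, (inner ℂ w f : ℂ) = 0 :=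
    fun hf => projCl_eq_zero _ _ hf
  have hAt_inj : (Function.Injective fun x : T.domain => T x) →
      ∀ z : At.domain, At z = 0 → z = 0 := by
    intro hinjT z hz
    have h3 := hfwd z
    rw [hz] at h3
    simp only [map_zero, sub_zero] at h3
    obtain ⟨y, hy1, hy2⟩ := T.mem_graph_iff.mp h3
    have hy0 : y = 0 := hinjT (show T y = T 0 by rw [hy2, T.map_zero])
    have hy1' : (y : H) = (z : H) := hy1
    exact Subtype.ext (by rw [← hy1', hy0]; rfl)
  have hT_inj : (∀ f : H, ∃! u : At.domain, At u = f) →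
      Function.Injective fun x : T.domain => T x := by
    intro hbij x y hxy
    have hxy' : T x = T y := hxy
    have hsub : T (x - y) = 0 := by rw [T.map_sub, hxy', sub_self]
    have hzero : ∀ z : T.domain, T z = 0 → (z : H) = 0 := by
      intro z hz
      have h3 : ((z : H), (0 : H)) ∈ T.graph := by
        have := T.mem_graph z; rwa [hz] at this
      obtain ⟨u, hzu, h0w⟩ := (hmemT _).mp h3
      dsimp only at hzu h0w
      have hperp : ∀ w ∈ S.Wsub At, (inner ℂ w (At u) : ℂ) = 0 := hprojW_zero h0w.symm
      have hkey := key_graph_mem S At h1 hcl (At u) hperp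
      obtain ⟨m, hm1, hm2⟩ := At.mem_graph_iff.mp hkey
      dsimp only at hm1 hm2
      have hum : u = m := (hbij (At u)).unique rfl hm2
      rw [hzu, show (u : H) = (m : H) from by rw [hum], ← hm1, sub_self]
    have h4 := hzero (x - y) hsub
    rw [Submodule.coe_sub] at h4
    exact Subtype.ext (sub_eq_zero.mp h4)
  have hiff : (∀ f : H, ∃! u : At.domain, At u = f) ↔
      (Function.Injective fun x : T.domain => T x) ∧
        Set.range (fun x : T.domain => T x) = (S.Wsub At : Set H) := by
    constructor
    · intro hbij
      refine ⟨hT_inj hbij, Set.Subset.antisymm ?_ ?_⟩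
      · rintro _ ⟨x, rfl⟩
        obtain ⟨u, hx1, hx2⟩ := (hmemT _).mp (T.mem_graph x)
        dsimp only at hx2 ⊢
        rw [hx2]
        exact hprojW_mem _
      · intro w hw
        obtain ⟨u, hu, -⟩ := hbij w
        have h3 := hfwd u
        rw [hu] at h3
        obtain ⟨z, hz1, hz2⟩ := T.mem_graph_iff.mp h3
        dsimp only at hz1 hz2
        exact ⟨z, by show T z = w; rw [hz2]; exact hprojW_self hw⟩
    · rintro ⟨hinjT, hranT⟩ f
      have hmem : S.projW At f ∈ Set.range (fun x : T.domain => T x) := by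
        rw [hranT]; exact hprojW_mem f
      obtain ⟨x, hx⟩ := hmem
      have hx' : T x = S.projW At f := hx
      obtain ⟨u₀, hx1, hx2⟩ := (hmemT _).mp (T.mem_graph x)
      have hx2' : T x = S.projW At (At u₀) := hx2
      have hperp : ∀ w ∈ S.Wsub At, (inner ℂ w (f - At u₀) : ℂ) = 0 := by
        apply hprojW_zero
        rw [map_sub, ← hx', ← hx2', sub_self]
      have hkey := key_graph_mem S At h1 hcl (f - At u₀) hperp
      obtain ⟨m, hm1, hm2⟩ := At.mem_graph_iff.mp hkey
      dsimp only at hm1 hm2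
      refine ⟨u₀ + m, ?_, ?_⟩
      · show At (u₀ + m) = f
        rw [At.map_add, hm2]; abel
      · intro v hv
        have hv' : At v = f := hv
        have h0 : At (v - (u₀ + m)) = 0 := by
          rw [At.map_sub, hv', At.map_add, hm2]; abel
        exact sub_eq_zero.mp (hAt_inj hinjT _ h0)
  refine ⟨hiff, ?_⟩
  intro hbij f x hx u hu
  have hinjT := hT_inj hbij
  have h3 := hfwd u
  rw [hu] at h3
  obtain ⟨z₁, hz11, hz12⟩ := T.mem_graph_iff.mp hx
  obtain ⟨z₂, hz21, hz22⟩ := T.mem_graph_iff.mp h3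
  dsimp only at hz11 hz12 hz21 hz22
  have hz : z₁ = z₂ := hinjT (show T z₁ = T z₂ by rw [hz12, hz22])
  have hxu : x = (u : H) - S.Agaminv f := by rw [← hz11, hz, hz21]
  rw [hxu]; abel


end GrubbExt
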